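/- One has ⟨n,m|q,p⟩ = ⟨⟨n,m|−q,p⟩⟩ − iπ(p·n − q·m) as complex numbers; in particular ⟨n,m|n,m⟩ = ⟨⟨n,m|−n,m⟩⟩. -/

import Mathlib

open scoped Real BigOperators
open Matrix

/-- The complex pairing ⟨⟨n,m|q,p⟩⟩ associated to a period matrix Ω. -/
noncomputable def dd {h : ℕ} (Ω : Matrix (Fin h) (Fin h) ℂ)
    (n m q p : Fin h → ℤ) : ℂ :=
  (Real.pi : ℂ) * ∑ j, ∑ k,
    ((p j : ℂ) + ∑ i, (q i : ℂ) * Ω i j) *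
    ((((Matrix.of fun a b => (Ω a b).im)⁻¹ : Matrix (Fin h) (Fin h) ℝ) j k : ℝ) : ℂ) *
    ((m k : ℂ) - ∑ l, (starRingEnd ℂ) (Ω k l) * (n l : ℂ))

/-- The real scalar product ⟨n,m|q,p⟩ = Re ⟨⟨n,m|−q,p⟩⟩. -/
noncomputable def sp {h : ℕ} (Ω : Matrix (Fin h) (Fin h) ℂ)
    (n m q p : Fin h → ℤ) : ℝ :=
  (dd Ω n m (-q) p).re

lemma dd_im {h : ℕ} (Ω : Matrix (Fin h) (Fin h) ℂ)
    (hpos : (Matrix.of fun i j => (Ω i j).im).PosDef)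
    (n m q p : Fin h → ℤ) :
    (dd Ω n m (-q) p).im =
      Real.pi * ((∑ j, (p j : ℝ) * n j) - ∑ j, (q j : ℝ) * m j) := by
  set Y : Matrix (Fin h) (Fin h) ℝ := Matrix.of fun a b => (Ω a b).im with hYdef
  have hdet : IsUnit Y.det := hpos.det_pos.ne'.isUnit
  have hY1 : Y⁻¹ * Y = 1 := Matrix.nonsing_inv_mul Y hdet
  have hY2 : Y * Y⁻¹ = 1 := Matrix.mul_nonsing_inv Y hdet
  have K1 : ∀ j, ∑ k, Y⁻¹ j k * ∑ l, (Ω k l).im * (n l : ℝ) = (n j : ℝ) := by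
    intro j
    have h1 : Y⁻¹ *ᵥ (Y *ᵥ fun l => (n l : ℝ)) = fun l => (n l : ℝ) := by
      rw [Matrix.mulVec_mulVec, hY1, Matrix.one_mulVec]
    have := congrFun h1 j
    simpa [Matrix.mulVec, dotProduct, hYdef] using this
  have K2 : ∀ k, ∑ j, (∑ i, (q i : ℝ) * (Ω i j).im) * Y⁻¹ j k = (q k : ℝ) := by
    intro k
    have h1 : ((fun i => (q i : ℝ)) ᵥ* Y) ᵥ* Y⁻¹ = fun i => (q i : ℝ) := by
      rw [Matrix.vecMul_vecMul, hY2, Matrix.vecMul_one]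
    have := congrFun h1 k
    simpa [Matrix.vecMul, dotProduct, hYdef] using this
  have hterm : ∀ j k,
      ((((p j : ℂ) + ∑ i, ((-q) i : ℂ) * Ω i j) *
        ((Y⁻¹ j k : ℝ) : ℂ) *
        ((m k : ℂ) - ∑ l, (starRingEnd ℂ) (Ω k l) * (n l : ℂ)))).im
      = ((p j : ℝ) - ∑ i, (q i : ℝ) * (Ω i j).re) * (Y⁻¹ j k * ∑ l, (Ω k l).im * (n l : ℝ))
        - ((∑ i, (q i : ℝ) * (Ω i j).im) * Y⁻¹ j k) * ((m k : ℝ) - ∑ l, (Ω k l).re * (n l : ℝ)) := by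
    intro j k
    simp only [Complex.mul_im, Complex.mul_re, Complex.add_re, Complex.add_im,
      Complex.sub_re, Complex.sub_im, Complex.im_sum, Complex.re_sum,
      Complex.intCast_re, Complex.intCast_im, Complex.ofReal_re, Complex.ofReal_im,
      Complex.conj_re, Complex.conj_im, Pi.neg_apply, Int.cast_neg,
      Complex.neg_re, Complex.neg_im, neg_mul, neg_zero, zero_mul, mul_zero,
      zero_sub, sub_zero, add_zero, zero_add, Finset.sum_neg_distrib]
    ring
  have him : (dd Ω n m (-q) p).im =
      Real.pi * (∑ j, ∑ k,
        (((p j : ℝ) - ∑ i, (q i : ℝ) * (Ω i j).re) * (Y⁻¹ j k * ∑ l, (Ω k l).im * (n l : ℝ))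
        - ((∑ i, (q i : ℝ) * (Ω i j).im) * Y⁻¹ j k) * ((m k : ℝ) - ∑ l, (Ω k l).re * (n l : ℝ)))) := by
    rw [dd]
    simp only [Complex.mul_im, Complex.ofReal_re, Complex.ofReal_im, zero_mul, add_zero]
    rw [← hYdef]
    congr 1
    rw [Complex.im_sum]
    refine Finset.sum_congr rfl fun j _ => ?_
    rw [Complex.im_sum]
    exact Finset.sum_congr rfl fun k _ => hterm j k
  rw [him]
  congr 1
  have e1 : ∑ j, ∑ k,
      (((p j : ℝ) - ∑ i, (q i : ℝ) * (Ω i j).re) * (Y⁻¹ j k * ∑ l, (Ω k l).im * (n l : ℝ))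
      - ((∑ i, (q i : ℝ) * (Ω i j).im) * Y⁻¹ j k) * ((m k : ℝ) - ∑ l, (Ω k l).re * (n l : ℝ)))
      = (∑ j, ((p j : ℝ) - ∑ i, (q i : ℝ) * (Ω i j).re) * (n j : ℝ))
        - ∑ k, (q k : ℝ) * ((m k : ℝ) - ∑ l, (Ω k l).re * (n l : ℝ)) := by
    rw [Finset.sum_congr rfl (fun j _ => Finset.sum_sub_distrib _ _), Finset.sum_sub_distrib]
    congr 1
    · refine Finset.sum_congr rfl fun j _ => ?_
      rw [← Finset.mul_sum, K1]
    · rw [Finset.sum_comm]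
      refine Finset.sum_congr rfl fun k _ => ?_
      rw [← Finset.sum_mul, K2]
  rw [e1]
  have e2 : ∑ j, ((p j : ℝ) - ∑ i, (q i : ℝ) * (Ω i j).re) * (n j : ℝ)
      = (∑ j, (p j : ℝ) * n j) - ∑ i, (q i : ℝ) * ∑ j, (Ω i j).re * (n j : ℝ) := by
    simp only [sub_mul, Finset.sum_sub_distrib]
    congr 1
    calc ∑ x, (∑ i, (q i : ℝ) * (Ω i x).re) * (n x : ℝ)
        = ∑ x, ∑ i, (q i : ℝ) * (Ω i x).re * (n x : ℝ) := by simp [Finset.sum_mul]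
      _ = ∑ i, ∑ x, (q i : ℝ) * (Ω i x).re * (n x : ℝ) := Finset.sum_comm
      _ = ∑ i, (q i : ℝ) * ∑ j, (Ω i j).re * (n j : ℝ) := by
          simp [Finset.mul_sum, mul_assoc]
  have e3 : ∑ k, (q k : ℝ) * ((m k : ℝ) - ∑ l, (Ω k l).re * (n l : ℝ))
      = (∑ k, (q k : ℝ) * m k) - ∑ k, (q k : ℝ) * ∑ l, (Ω k l).re * (n l : ℝ) := by
    simp [mul_sub, Finset.sum_sub_distrib]
  rw [e2, e3]
  ring

theorem stmt7 (h : ℕ) (Ω : Matrix (Fin h) (Fin h) ℂ)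
    (hsym : Ω.IsSymm)
    (hpos : (Matrix.of fun i j => (Ω i j).im).PosDef)
    (n m q p : Fin h → ℤ) :
    ((sp Ω n m q p : ℝ) : ℂ)
        = dd Ω n m (-q) p
          - Complex.I * (Real.pi : ℂ) *
            (((∑ j, p j * n j) - ∑ j, q j * m j : ℤ) : ℂ)
    ∧ ((sp Ω n m n m : ℝ) : ℂ) = dd Ω n m (-n) m := by
  constructor
  · apply Complex.ext
    · simp [sp, Complex.sub_re, Complex.mul_re, Complex.mul_im]
    · have hdi := dd_im Ω hpos n m q p
      simp only [sp, Complex.ofReal_im, Complex.sub_im, Complex.mul_im, Complex.mul_re,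
        Complex.I_re, Complex.I_im, Complex.ofReal_re, Complex.ofReal_im,
        Complex.intCast_im, Complex.intCast_re, hdi]
      push_cast
      ring
  · apply Complex.ext
    · simp [sp]
    · have hdi := dd_im Ω hpos n m n m
      simp only [sp, Complex.ofReal_im, hdi]
      have : ∑ j, (m j : ℝ) * n j = ∑ j, (n j : ℝ) * m j :=
        Finset.sum_congr rfl fun j _ => mul_comm _ _
      rw [this]
      ring
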